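/- For all s, t ≥ 0 one has the identity ∫₀ᵗ ∫₀ˢ H(2H−1)|u−v|^{2H−2} du dv = (1/2)(t^{2H} + s^{2H} − |t−s|^{2H}). In particular the covariance function of fractional Brownian motion with Hurst parameter H ∈ (1/2,1) is obtained by integrating the kernel φ over the rectangle [0,t] × [0,s]. -/

import Mathlib

open MeasureTheory intervalIntegral Set Filter

private lemma abs_real_sign_le (x : ℝ) : |Real.sign x| ≤ 1 := by
  rcases Real.sign_apply_eq x with h | h | h <;> rw [h] <;> norm_num

private lemma intervalIntegrable_abs_rpow_zero {r : ℝ} (hr : -1 < r) (a b : ℝ) :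
    IntervalIntegrable (fun x : ℝ => |x| ^ r) volume a b := by
  have key : ∀ c : ℝ, IntervalIntegrable (fun x : ℝ => |x| ^ r) volume 0 c := by
    intro c
    rcases le_total 0 c with hc | hc
    · apply (intervalIntegrable_rpow' hr (a := 0) (b := c)).congr_ae
      filter_upwards [ae_restrict_mem measurableSet_uIoc] with x hx
      rw [Set.uIoc_of_le hc] at hx
      rw [abs_of_pos hx.1]
    · have h1 : IntervalIntegrable (fun x : ℝ => (-x) ^ r) volume 0 c := by
        have h0 := intervalIntegrable_rpow' hr (a := 0) (b := -c)
        have h2 := (IntervalIntegrable.iff_comp_neg).mp h0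
        simpa using h2
      apply h1.congr_ae
      filter_upwards [ae_restrict_mem measurableSet_uIoc] with x hx
      rw [Set.uIoc_comm, Set.uIoc_of_le hc] at hx
      rw [abs_of_nonpos hx.2]
  exact (key a).symm.trans (key b)

private lemma intervalIntegrable_abs_rpow {r : ℝ} (hr : -1 < r) (c a b : ℝ) :
    IntervalIntegrable (fun u : ℝ => |u - c| ^ r) volume a b := by
  have := (intervalIntegrable_abs_rpow_zero hr (a - c) (b - c)).comp_sub_right c
  simpa using this

private lemma signPow_continuous {p : ℝ} (hp : 0 < p) :
    Continuous (fun x : ℝ => Real.sign x * |x| ^ p) := by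
  have habs : Continuous (fun x : ℝ => |x| ^ p) :=
    continuous_abs.rpow_const (fun x => Or.inr hp.le)
  rw [continuous_iff_continuousAt]
  intro x
  rcases lt_trichotomy x 0 with h | rfl | h
  · have hc : ContinuousAt (fun y : ℝ => (-1 : ℝ) * |y| ^ p) x :=
      (continuous_const.mul habs).continuousAt
    apply hc.congr
    filter_upwards [Iio_mem_nhds h] with y (hy : y < 0)
    simp [Real.sign_of_neg hy]
  · have hbnd : ∀ x : ℝ, ‖Real.sign x * |x| ^ p‖ ≤ |x| ^ p := by
      intro x
      have h1 : ‖Real.sign x * |x| ^ p‖ = |Real.sign x| * |x| ^ p := by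
        rw [norm_mul, Real.norm_eq_abs, Real.norm_eq_abs,
          abs_of_nonneg (Real.rpow_nonneg (abs_nonneg x) p)]
      rw [h1]
      nlinarith [abs_real_sign_le x, Real.rpow_nonneg (abs_nonneg x) p,
        abs_nonneg (Real.sign x)]
    have htd : Filter.Tendsto (fun x : ℝ => |x| ^ p) (nhds 0) (nhds 0) := by
      have := habs.tendsto 0
      simpa [Real.zero_rpow hp.ne'] using this
    have ht := squeeze_zero_norm hbnd htd
    have h0 : Real.sign (0:ℝ) * |(0:ℝ)| ^ p = 0 := by simp [Real.sign_zero]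
    simpa [ContinuousAt, h0] using ht
  · have hc : ContinuousAt (fun y : ℝ => (1 : ℝ) * |y| ^ p) x :=
      (continuous_const.mul habs).continuousAt
    apply hc.congr
    filter_upwards [Ioi_mem_nhds h] with y (hy : 0 < y)
    simp [Real.sign_of_pos hy]

private lemma signPow_hasDerivAt {p : ℝ} (hp : 0 < p) {x : ℝ} (hx : x ≠ 0) :
    HasDerivAt (fun y : ℝ => Real.sign y * |y| ^ p) (p * |x| ^ (p - 1)) x := by
  rcases hx.lt_or_gt with h | h
  · have h2 : HasDerivAt (fun z : ℝ => z ^ p) (p * (-x) ^ (p - 1)) (-x) :=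
      Real.hasDerivAt_rpow_const (Or.inl (neg_ne_zero.mpr hx))
    have h3 : HasDerivAt (fun y : ℝ => -y) (-1 : ℝ) x := (hasDerivAt_id x).neg
    have h4 := (h2.comp x h3).neg
    have h1 : HasDerivAt (fun y : ℝ => -((-y) ^ p)) (p * (-x) ^ (p - 1)) x := by
      refine h4.congr_deriv ?_; ring
    have h5 : HasDerivAt (fun y : ℝ => Real.sign y * |y| ^ p) (p * (-x) ^ (p - 1)) x := by
      apply h1.congr_of_eventuallyEq
      filter_upwards [Iio_mem_nhds h] with y (hy : y < 0)
      rw [Real.sign_of_neg hy, abs_of_neg hy]; ring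
    rwa [abs_of_neg h]
  · have h2 : HasDerivAt (fun z : ℝ => z ^ p) (p * x ^ (p - 1)) x :=
      Real.hasDerivAt_rpow_const (Or.inl hx)
    have h5 : HasDerivAt (fun y : ℝ => Real.sign y * |y| ^ p) (p * x ^ (p - 1)) x := by
      apply h2.congr_of_eventuallyEq
      filter_upwards [Ioi_mem_nhds h] with y (hy : 0 < y)
      rw [Real.sign_of_pos hy, abs_of_pos hy]; ring
    rwa [abs_of_pos h]

private lemma abs_rpow_hasDerivAt {q : ℝ} {x : ℝ} (hx : x ≠ 0) :
    HasDerivAt (fun y : ℝ => |y| ^ q) (q * Real.sign x * |x| ^ (q - 1)) x := by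
  rcases hx.lt_or_gt with h | h
  · have h2 : HasDerivAt (fun z : ℝ => z ^ q) (q * (-x) ^ (q - 1)) (-x) :=
      Real.hasDerivAt_rpow_const (Or.inl (neg_ne_zero.mpr hx))
    have h3 : HasDerivAt (fun y : ℝ => -y) (-1 : ℝ) x := (hasDerivAt_id x).neg
    have h4 := h2.comp x h3
    have h5 : HasDerivAt (fun y : ℝ => |y| ^ q) (q * (-x) ^ (q - 1) * (-1)) x := by
      apply h4.congr_of_eventuallyEq
      filter_upwards [Iio_mem_nhds h] with y (hy : y < 0)
      rw [abs_of_neg hy]; rfl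
    have := h5
    rw [Real.sign_of_neg h, abs_of_neg h]
    convert this using 1; ring
  · have h2 : HasDerivAt (fun z : ℝ => z ^ q) (q * x ^ (q - 1)) x :=
      Real.hasDerivAt_rpow_const (Or.inl hx)
    have h5 : HasDerivAt (fun y : ℝ => |y| ^ q) (q * x ^ (q - 1)) x := by
      apply h2.congr_of_eventuallyEq
      filter_upwards [Ioi_mem_nhds h] with y (hy : 0 < y)
      rw [abs_of_pos hy]
    rw [Real.sign_of_pos h, abs_of_pos h]
    convert h5 using 1; ring

/-- The covariance identity for fractional Brownian motion with Hurst
parameter `H ∈ (1/2,1)`: for all `s, t ≥ 0`,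
`∫₀ᵗ ∫₀ˢ H(2H−1)|u−v|^{2H−2} du dv = (1/2)(t^{2H} + s^{2H} − |t−s|^{2H})`. -/
theorem fbm_covariance_integral
    (H : ℝ) (hH : H ∈ Set.Ioo (1/2 : ℝ) 1)
    (s t : ℝ) (hs : 0 ≤ s) (ht : 0 ≤ t) :
    (∫ v in (0:ℝ)..t, ∫ u in (0:ℝ)..s, H * (2*H - 1) * |u - v| ^ (2*H - 2))
      = (1/2) * (t ^ (2*H) + s ^ (2*H) - |t - s| ^ (2*H)) := by
  obtain ⟨hH1, hH2⟩ := hH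
  have hp0 : (0:ℝ) < 2*H - 1 := by linarith
  have hpm : (-1:ℝ) < 2*H - 2 := by linarith
  have hq0 : (0:ℝ) < 2*H := by linarith
  -- inner integral
  have inner : ∀ v : ℝ, (∫ u in (0:ℝ)..s, H * (2*H - 1) * |u - v| ^ (2*H - 2))
      = H * (Real.sign (s - v) * |s - v| ^ (2*H - 1)
          + Real.sign v * |v| ^ (2*H - 1)) := by
    intro v
    have key : (∫ u in (0:ℝ)..s, (2*H - 1) * |u - v| ^ ((2*H - 1) - 1))
        = Real.sign (s - v) * |s - v| ^ (2*H - 1)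
          - Real.sign ((0:ℝ) - v) * |(0:ℝ) - v| ^ (2*H - 1) := by
      apply integral_eq_of_hasDerivAt_off_countable
        (fun u => Real.sign (u - v) * |u - v| ^ (2*H - 1))
        (fun u => (2*H - 1) * |u - v| ^ ((2*H - 1) - 1))
        (s := {v}) (Set.countable_singleton v)
      · exact ((signPow_continuous hp0).comp
          (continuous_id.sub continuous_const)).continuousOn
      · intro x hx
        have hxv : x - v ≠ 0 := sub_ne_zero.mpr (by simpa using hx.2)
        have hd := (signPow_hasDerivAt hp0 hxv).comp x ((hasDerivAt_id x).sub_const v)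
        simpa [Function.comp_def] using hd
      · have := (intervalIntegrable_abs_rpow (by linarith : (-1:ℝ) < (2*H - 1) - 1)
          v 0 s).const_mul (2*H - 1)
        exact this
    have e1 : (2*H - 2) = (2*H - 1) - 1 := by ring
    calc (∫ u in (0:ℝ)..s, H * (2*H - 1) * |u - v| ^ (2*H - 2))
        = H * ∫ u in (0:ℝ)..s, (2*H - 1) * |u - v| ^ ((2*H - 1) - 1) := by
          rw [← intervalIntegral.integral_const_mul]
          congr 1; funext u; rw [e1]; ring
      _ = H * (Real.sign (s - v) * |s - v| ^ (2*H - 1)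
          + Real.sign v * |v| ^ (2*H - 1)) := by
          rw [key]
          have : Real.sign ((0:ℝ) - v) * |(0:ℝ) - v| ^ (2*H - 1)
              = - (Real.sign v * |v| ^ (2*H - 1)) := by
            rw [zero_sub, Real.sign_neg, abs_neg]; ring
          rw [this]; ring
  simp only [inner]
  -- outer integral
  have key2 : (∫ v in (0:ℝ)..t, H * (Real.sign (s - v) * |s - v| ^ (2*H - 1)
        + Real.sign v * |v| ^ (2*H - 1)))
      = (fun v : ℝ => (1/2) * (|v| ^ (2*H) - |s - v| ^ (2*H))) t
        - (fun v : ℝ => (1/2) * (|v| ^ (2*H) - |s - v| ^ (2*H))) 0 := by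
    apply integral_eq_of_hasDerivAt_off_countable
      (fun v : ℝ => (1/2) * (|v| ^ (2*H) - |s - v| ^ (2*H)))
      (fun v : ℝ => H * (Real.sign (s - v) * |s - v| ^ (2*H - 1)
        + Real.sign v * |v| ^ (2*H - 1)))
      (s := {0, s}) (((Set.finite_singleton s).insert 0).countable)
    · have c1 : Continuous (fun v : ℝ => |v| ^ (2*H)) :=
        continuous_abs.rpow_const (fun x => Or.inr hq0.le)
      exact (continuous_const.mul (c1.sub
        (c1.comp (continuous_const.sub continuous_id)))).continuousOn
    · intro x hx
      have hx0 : x ≠ 0 := by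
        intro hc; exact hx.2 (by simp [hc])
      have hxs : s - x ≠ 0 := by
        intro hc
        exact hx.2 (by simp [show x = s by linarith [sub_eq_zero.mp hc]])
      have d1 : HasDerivAt (fun v : ℝ => |v| ^ (2*H))
          (2*H * Real.sign x * |x| ^ (2*H - 1)) x := abs_rpow_hasDerivAt hx0
      have d2' := (abs_rpow_hasDerivAt (q := 2*H) hxs).comp x
        ((hasDerivAt_id x).const_sub s)
      have d2 : HasDerivAt (fun v : ℝ => |s - v| ^ (2*H))
          (2*H * Real.sign (s - x) * |s - x| ^ (2*H - 1) * (-1)) x := by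
        simpa [Function.comp_def] using d2'
      have := ((d1.sub d2).const_mul (1/2 : ℝ))
      refine this.congr_deriv ?_
      ring
    · apply Continuous.intervalIntegrable
      exact continuous_const.mul
        (((signPow_continuous hp0).comp (continuous_const.sub continuous_id)).add
          (signPow_continuous hp0))
  rw [key2]
  have hz : |(0:ℝ)| ^ (2*H) = 0 := by
    rw [abs_zero, Real.zero_rpow hq0.ne']
  simp only [sub_zero]
  rw [hz, abs_of_nonneg ht, abs_of_nonneg hs, abs_sub_comm s t]
  ring
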